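/- If ‖2^n‖ = 2n holds for all n ≥ 1, then for all n > 0 the base-3 digit sum of 2^n satisfies S_3(2^n) > 0.107·n. -/

import Mathlib

/-- `IsExpr n m` : the positive integer `n` is representable by an arithmetic
expression in basis `{1, +, ·}` containing exactly `m` ones. -/
inductive IsExpr : ℕ → ℕ → Prop
  | one : IsExpr 1 1
  | add {a b m n : ℕ} : IsExpr a m → IsExpr b n → IsExpr (a + b) (m + n)
  | mul {a b m n : ℕ} : IsExpr a m → IsExpr b n → IsExpr (a * b) (m + n)

/-- Integer complexity `‖n‖`: the minimum number of 1's needed to represent `n`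
using 1's, addition and multiplication. -/
noncomputable def cpx (n : ℕ) : ℕ := sInf {m | IsExpr n m}

lemma isExpr_self : ∀ d : ℕ, 1 ≤ d → IsExpr d d := by
  intro d hd
  induction d with
  | zero => omega
  | succ k ih =>
    rcases Nat.eq_or_lt_of_le hd with h | h
    · rw [← h]; exact IsExpr.one
    · have hk : 1 ≤ k := by omega
      exact IsExpr.add (ih hk) IsExpr.one

/-- Horner-scheme upper bound: a positive `m` has an expression with at most
`3 * len + sum - 3` ones, where `len`/`sum` are base-3 digit length / sum. -/
lemma horner_bound : ∀ m : ℕ, 0 < m →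
    ∃ k : ℕ, IsExpr m k ∧ k + 3 ≤ 3 * (Nat.digits 3 m).length + (Nat.digits 3 m).sum := by
  intro m
  induction m using Nat.strong_induction_on with
  | _ m ih =>
    intro hm
    have hdig : Nat.digits 3 m = m % 3 :: Nat.digits 3 (m / 3) :=
      Nat.digits_def' (by norm_num) hm
    by_cases h3 : m < 3
    · refine ⟨m, isExpr_self m hm, ?_⟩
      have : Nat.digits 3 m = [m] := by
        rw [hdig, Nat.mod_eq_of_lt h3, Nat.div_eq_of_lt h3, Nat.digits_zero]
      rw [this]; simp; omega
    · push_neg at h3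
      have hq : 0 < m / 3 := Nat.div_pos h3 (by norm_num)
      have hlt : m / 3 < m := Nat.div_lt_self hm (by norm_num)
      obtain ⟨k, hk, hkle⟩ := ih (m / 3) hlt hq
      have h33 : IsExpr 3 3 := by
        have : IsExpr 2 2 := IsExpr.add IsExpr.one IsExpr.one
        exact IsExpr.add this IsExpr.one
      have hprod : IsExpr (3 * (m / 3)) (3 + k) := IsExpr.mul h33 hk
      have hr : m % 3 < 3 := Nat.mod_lt _ (by norm_num)
      rcases Nat.eq_zero_or_pos (m % 3) with hr0 | hrpos
      · refine ⟨3 + k, ?_, ?_⟩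
        · have : 3 * (m / 3) = m := by omega
          rwa [this] at hprod
        · rw [hdig]; simp [List.sum_cons, hr0]; omega
      · refine ⟨3 + k + m % 3, ?_, ?_⟩
        · have hrexp : IsExpr (m % 3) (m % 3) := isExpr_self _ hrpos
          have := IsExpr.add hprod hrexp
          have heq : 3 * (m / 3) + m % 3 = m := by omega
          rwa [heq] at this
        · rw [hdig]; simp [List.sum_cons]; omega

lemma cpx_le (m : ℕ) (hm : 0 < m) :
    cpx m + 3 ≤ 3 * (Nat.digits 3 m).length + (Nat.digits 3 m).sum := by
  obtain ⟨k, hk, hle⟩ := horner_bound m hm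
  have : cpx m ≤ k := Nat.sInf_le hk
  omega

/-- if `‖2^n‖ = 2n` for all `n ≥ 1`, then `S₃(2^n) > 0.107·n`
for all `n > 0`. -/
theorem stmt2 (h : ∀ n : ℕ, 1 ≤ n → cpx (2 ^ n) = 2 * n) :
    ∀ n : ℕ, 0 < n → ((Nat.digits 3 (2 ^ n)).sum : ℝ) > 0.107 * n := by
  intro n hn
  set m := 2 ^ n with hm
  have hmpos : 0 < m := Nat.pow_pos (by norm_num)
  set len := (Nat.digits 3 m).length with hlen
  set S := (Nat.digits 3 m).sum with hS
  have hlenpos : 0 < len := by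
    rw [hlen, List.length_pos_iff]
    exact Nat.digits_ne_nil_iff_ne_zero.mpr hmpos.ne'
  set L := len - 1 with hL
  -- 3^L ≤ 2^n
  have hpow : 3 ^ L ≤ m := by
    have := Nat.base_pow_length_digits_le 3 m (by norm_num) hmpos.ne'
    have h3 : 3 ^ len ≤ 3 * m := this
    have : 3 * 3 ^ L ≤ 3 * m := by
      have : 3 ^ len = 3 * 3 ^ L := by
        rw [hL]
        rw [← pow_succ']
        congr 1
        omega
      omega
    omega
  -- 2n ≤ 3L + S
  have hcpx := h n hn
  have hub := cpx_le m hmpos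
  have hcpx' : cpx m = 2 * n := by rw [hm]; exact hcpx
  have hkey : 2 * n ≤ 3 * L + S := by omega
  -- 3000 L < 1893 n
  have hLn : 3000 * L < 1893 * n := by
    by_contra hcon
    push_neg at hcon
    have h1 : (3:ℕ) ^ (1893 * n) ≤ 3 ^ (3000 * L) :=
      Nat.pow_le_pow_right (by norm_num) hcon
    have h2 : (3:ℕ) ^ (3000 * L) ≤ 2 ^ (3000 * n) := by
      calc (3:ℕ) ^ (3000 * L) = (3 ^ L) ^ 3000 := by rw [← pow_mul, Nat.mul_comm]
        _ ≤ (2 ^ n) ^ 3000 := Nat.pow_le_pow_left hpow 3000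
        _ = 2 ^ (3000 * n) := by rw [← pow_mul, Nat.mul_comm]
    have h3 : (2:ℕ) ^ (3000 * n) < 3 ^ (1893 * n) := by
      calc (2:ℕ) ^ (3000 * n) = (2 ^ 3000) ^ n := by rw [← pow_mul]
        _ < (3 ^ 1893) ^ n := Nat.pow_lt_pow_left (by decide +kernel) hn.ne'
        _ = 3 ^ (1893 * n) := by rw [← pow_mul]
    omega
  -- conclude over ℝ
  have hSr : (S : ℝ) ≥ 2 * n - 3 * L := by
    have : (2 * n : ℝ) ≤ 3 * L + S := by exact_mod_cast hkey
    linarith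
  have hLr : (3000 : ℝ) * L < 1893 * n := by exact_mod_cast hLn
  show (S : ℝ) > 0.107 * n
  nlinarith [hSr, hLr]
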